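/- arXiv:2307.01959 — 2 statements merged into one kernel-verified Lean document; each statement's English description precedes it below -/
import Mathlib

section
/- Let J be a proper two-sided ideal of B(H) and A a closed range operator. If there exists a partial isometry V and an invertible G with G − I ∈ J such that GA = V, then AA* − P_{R(A)} ∈ J. -/
open ContinuousLinearMap
open scoped ENNReal

noncomputable section

variable {H : Type*} [NormedAddCommGroup H] [InnerProductSpace ℂ H] [CompleteSpace H]

/-- Reduced minimum modulus `γ(A) = inf {‖A f‖ : f ∈ N(A)ᗮ, ‖f‖ = 1}`. -/
def gamma (A : H →L[ℂ] H) : ℝ :=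
  sInf {c : ℝ | ∃ f ∈ (LinearMap.ker (A : H →ₗ[ℂ] H))ᗮ, ‖f‖ = 1 ∧ c = ‖A f‖}

/-- `B` is the Moore–Penrose inverse of `A`. -/
def IsMoorePenrose (A B : H →L[ℂ] H) : Prop :=
  A ∘L B ∘L A = A ∧ B ∘L A ∘L B = B ∧ IsSelfAdjoint (A ∘L B) ∧ IsSelfAdjoint (B ∘L A)

/-- `P` is an orthogonal projection. -/
def IsOrthoProj (P : H →L[ℂ] H) : Prop := P ∘L P = P ∧ IsSelfAdjoint P

/-- `P` is the orthogonal projection onto the subspace `S`. -/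
def IsOrthoProjOnto (P : H →L[ℂ] H) (S : Submodule ℂ H) : Prop :=
  IsOrthoProj P ∧ LinearMap.range (P : H →ₗ[ℂ] H) = S

/-- `V` is a partial isometry. -/
def IsPartialIsom (V : H →L[ℂ] H) : Prop := V ∘L adjoint V ∘L V = V

/-- `A = V C` is the polar decomposition of `A`: `C = |A|` and `V = V_A` is the
partial isometry with `N(V) = N(A)`. -/
def IsPolarDecomp (A V C : H →L[ℂ] H) : Prop :=
  A = V ∘L C ∧ C.IsPositive ∧ C ∘L C = adjoint A ∘L A ∧ IsPartialIsom V ∧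
    LinearMap.ker (V : H →ₗ[ℂ] H) = LinearMap.ker (A : H →ₗ[ℂ] H)

/-- `J` is a two-sided ideal of `B(H)`. -/
structure IsTwoSidedIdeal (J : Set (H →L[ℂ] H)) : Prop where
  zero_mem : (0 : H →L[ℂ] H) ∈ J
  add_mem : ∀ {A B : H →L[ℂ] H}, A ∈ J → B ∈ J → A + B ∈ J
  neg_mem : ∀ {A : H →L[ℂ] H}, A ∈ J → -A ∈ J
  mul_left : ∀ (B : H →L[ℂ] H) {A : H →L[ℂ] H}, A ∈ J → B ∘L A ∈ J
  mul_right : ∀ (B : H →L[ℂ] H) {A : H →L[ℂ] H}, A ∈ J → A ∘L B ∈ J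

/-- `J` is a proper two-sided ideal of `B(H)`. -/
def IsProperIdeal (J : Set (H →L[ℂ] H)) : Prop :=
  IsTwoSidedIdeal J ∧ J ≠ {0} ∧ J ≠ Set.univ

/-- The `n`-th approximation number of `A`; for a compact operator this is the
`(n+1)`-th singular value `s_{n+1}(A)`. -/
def approxNum (A : H →L[ℂ] H) (n : ℕ) : ℝ :=
  sInf {c : ℝ | ∃ F : H →L[ℂ] H, FiniteDimensional ℂ ↥(LinearMap.range (F : H →ₗ[ℂ] H)) ∧
    Module.finrank ℂ ↥(LinearMap.range (F : H →ₗ[ℂ] H)) ≤ n ∧ c = ‖A - F‖}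

/-- Submajorization `s(B) ≺_w s(A)` of the singular value sequences. -/
def Submaj (B A : H →L[ℂ] H) : Prop :=
  ∀ n : ℕ, ∑ i ∈ Finset.range n, approxNum B i ≤ ∑ i ∈ Finset.range n, approxNum A i

/-- `J` is arithmetic mean closed. -/
def IsArithMeanClosed (J : Set (H →L[ℂ] H)) : Prop :=
  ∀ A B : H →L[ℂ] H, A ∈ J → IsCompactOperator (⇑B) → Submaj B A → B ∈ J

/-- Symmetric norming function on the space of finitely supported real sequences. -/
structure IsSymmNormingFun (Φ : (ℕ →₀ ℝ) → ℝ) : Prop where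
  triangle : ∀ x y, Φ (x + y) ≤ Φ x + Φ y
  homog : ∀ (c : ℝ) (x), Φ (c • x) = |c| * Φ x
  definite : ∀ x, Φ x = 0 → x = 0
  normalized : Φ (Finsupp.single 0 1) = 1
  symm : ∀ (σ : Equiv.Perm ℕ) (x), Φ (Finsupp.equivMapDomain σ x) = Φ x
  abs_invariant : ∀ x, Φ (Finsupp.mapRange (fun t => |t|) abs_zero x) = Φ x

/-- The (possibly infinite) norm `‖A‖_Φ = sup_k Φ(s_1(A),…,s_k(A),0,…)`. -/
def phiNorm (Φ : (ℕ →₀ ℝ) → ℝ) (A : H →L[ℂ] H) : ℝ≥0∞ :=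
  ⨆ k : ℕ, ENNReal.ofReal (Φ (∑ i ∈ Finset.range k, Finsupp.single i (approxNum A i)))

/-- `(P, Q)` is a Fredholm pair of projections: `Q P|_{R(P)} : R(P) → R(Q)` has
finite-dimensional kernel `R(P) ∩ N(Q)`, finite-dimensional cokernel
(measured by `R(Q) ∩ N(P)`) and closed range. -/
def IsFredholmPair (P Q : H →L[ℂ] H) : Prop :=
  FiniteDimensional ℂ ↥(LinearMap.range (P : H →ₗ[ℂ] H) ⊓ LinearMap.ker (Q : H →ₗ[ℂ] H)) ∧
  FiniteDimensional ℂ ↥(LinearMap.range (Q : H →ₗ[ℂ] H) ⊓ LinearMap.ker (P : H →ₗ[ℂ] H)) ∧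
  IsClosed (Q '' (LinearMap.range (P : H →ₗ[ℂ] H) : Set H))

/-- Essential codimension `[P : Q] = dim(N(Q) ∩ R(P)) − dim(R(Q) ∩ N(P))`. -/
def essCodim (P Q : H →L[ℂ] H) : ℤ :=
  (Module.finrank ℂ ↥(LinearMap.range (P : H →ₗ[ℂ] H) ⊓ LinearMap.ker (Q : H →ₗ[ℂ] H)) : ℤ) -
    (Module.finrank ℂ ↥(LinearMap.range (Q : H →ₗ[ℂ] H) ⊓ LinearMap.ker (P : H →ₗ[ℂ] H)) : ℤ)

/-- `{f n}` is a frame for the closed subspace `S`. -/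
def IsFrameFor (f : ℕ → H) (S : Submodule ℂ H) : Prop :=
  IsClosed (S : Set H) ∧ (∀ n, f n ∈ S) ∧
  ∃ α β : ℝ, 0 < α ∧ α ≤ β ∧ ∀ v ∈ S,
    α * ‖v‖ ^ 2 ≤ ∑' n, ‖(inner ℂ v (f n) : ℂ)‖ ^ 2 ∧
    ∑' n, ‖(inner ℂ v (f n) : ℂ)‖ ^ 2 ≤ β * ‖v‖ ^ 2

/-- The nonzero point spectrum of `CA`, as an index type. -/
def specIdx (CA : H →L[ℂ] H) : Type _ :=
  {lam : ℝ // lam ≠ 0 ∧ LinearMap.ker ((CA - (lam : ℂ) • (1 : H →L[ℂ] H)) : H →ₗ[ℂ] H) ≠ ⊥}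

set_option linter.unusedSectionVars false

local notation "⟪" x ", " y "⟫" => @inner ℂ _ _ x y

lemma IsTwoSidedIdeal.star_mem {J : Set (H →L[ℂ] H)} (hJ : IsTwoSidedIdeal J)
    {T : H →L[ℂ] H} (hT : T ∈ J) : adjoint T ∈ J := by
  have hpos : (0 : H →L[ℂ] H) ≤ star T * T := star_mul_self_nonneg T
  set S : H →L[ℂ] H := CFC.sqrt (star T * T) with hSdef
  have hS0 : (0 : H →L[ℂ] H) ≤ S := CFC.sqrt_nonneg _
  have hSS : S * S = star T * T := CFC.sqrt_mul_sqrt_self _ hpos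
  have hSsa : IsSelfAdjoint S :=
    ((ContinuousLinearMap.nonneg_iff_isPositive S).mp hS0).isSelfAdjoint
  have hSadj : adjoint S = S := by rw [← star_eq_adjoint]; exact hSsa
  -- inner product identity
  have hinnerST : ∀ x : H, ⟪S x, S x⟫ = ⟪T x, T x⟫ := by
    intro x
    have h1 : ⟪(S * S) x, x⟫ = ⟪S x, S x⟫ := by
      have h := adjoint_inner_left S x (S x)
      rw [hSadj] at h
      rw [mul_def, comp_apply]
      exact h
    have h2 : ⟪(star T * T) x, x⟫ = ⟪T x, T x⟫ := by
      rw [star_eq_adjoint, mul_def, comp_apply, adjoint_inner_left]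
    rw [← h1, hSS, h2]
  have hnorm : ∀ x : H, ‖S x‖ = ‖T x‖ := by
    intro x
    have := hinnerST x
    rw [inner_self_eq_norm_sq_to_K, inner_self_eq_norm_sq_to_K] at this
    have h2 : (‖S x‖ : ℝ) ^ 2 = ‖T x‖ ^ 2 := by exact_mod_cast this
    have := congrArg Real.sqrt h2
    rwa [Real.sqrt_sq (norm_nonneg _), Real.sqrt_sq (norm_nonneg _)] at this
  -- kernel inclusion
  have hker : LinearMap.ker (S : H →ₗ[ℂ] H) ≤ LinearMap.ker (T : H →ₗ[ℂ] H) := by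
    intro x hx
    simp only [LinearMap.mem_ker, ContinuousLinearMap.coe_coe] at hx ⊢
    have : ‖T x‖ = 0 := by rw [← hnorm, hx, norm_zero]
    exact norm_eq_zero.mp this
  -- the isometry on the range of S
  set R : Submodule ℂ H := LinearMap.range (S : H →ₗ[ℂ] H) with hRdef
  set q : (H ⧸ LinearMap.ker (S : H →ₗ[ℂ] H)) →ₗ[ℂ] H :=
    (LinearMap.ker (S : H →ₗ[ℂ] H)).liftQ (T : H →ₗ[ℂ] H) hker with hqdef
  set e' := LinearMap.quotKerEquivRange (S : H →ₗ[ℂ] H) with he'def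
  set u₀ : R →ₗ[ℂ] H := q ∘ₗ (e'.symm : R →ₗ[ℂ] _) with hu₀def
  have hu₀ : ∀ x : H, ∀ h : S x ∈ R, u₀ ⟨S x, h⟩ = T x := by
    intro x h
    have h1 : e'.symm ⟨S x, h⟩ = (LinearMap.ker (S : H →ₗ[ℂ] H)).mkQ x :=
      LinearMap.quotKerEquivRange_symm_apply_image (S : H →ₗ[ℂ] H) x h
    simp only [hu₀def, LinearMap.coe_comp, Function.comp_apply, LinearEquiv.coe_coe, h1]
    simp [hqdef, Submodule.mkQ_apply]
  have hu₀norm : ∀ y : R, ‖u₀ y‖ = ‖y‖ := by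
    rintro ⟨y, x, rfl⟩
    show ‖u₀ ⟨S x, ⟨x, rfl⟩⟩‖ = ‖S x‖
    rw [hu₀ x ⟨x, rfl⟩, hnorm]
  set u₁ : R →ₗᵢ[ℂ] H := ⟨u₀, hu₀norm⟩ with hu₁def
  -- extend to the closure E of R
  set E := R.topologicalClosure with hEdef
  haveI : CompleteSpace E := (R.isClosed_topologicalClosure).completeSpace_coe
  set e : R →L[ℂ] E := ContinuousLinearMap.codRestrict R.subtypeL E
    (fun x => R.le_topologicalClosure x.2) with hedef
  have he_iso : Isometry e := AddMonoidHomClass.isometry_of_norm _ (fun x => rfl)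
  have h_dense : DenseRange e := by
    intro y
    have hy : (y : H) ∈ closure (R : Set H) := by
      have := y.2
      rwa [hEdef, ← Submodule.topologicalClosure_coe] at *
    rw [mem_closure_iff_seq_limit] at hy
    obtain ⟨f, hf1, hf2⟩ := hy
    rw [mem_closure_iff_seq_limit]
    refine ⟨fun n => e ⟨f n, hf1 n⟩, fun n => ⟨_, rfl⟩, ?_⟩
    have : Continuous (fun z : H => z) := continuous_id
    rw [tendsto_subtype_rng]
    exact hf2
  set u₂ : E →L[ℂ] H := u₁.toContinuousLinearMap.extend e
    with hu₂def
  have hu₂e : ∀ y : R, u₂ (e y) = u₁ y := fun y =>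
    ContinuousLinearMap.extend_eq (f := u₁.toContinuousLinearMap) (e := e) h_dense he_iso.isUniformInducing y
  have hu₂norm : ∀ y : E, ‖u₂ y‖ = ‖y‖ := by
    have hcl : IsClosed {y : E | ‖u₂ y‖ = ‖y‖} :=
      isClosed_eq (u₂.continuous.norm) continuous_subtype_val.norm
    intro y
    refine h_dense.induction_on y hcl ?_
    intro z
    rw [hu₂e z, u₁.norm_map]
    rfl
  set u₃ : E →ₗᵢ[ℂ] H := ⟨u₂.toLinearMap, hu₂norm⟩ with hu₃def
  have hinner₂ : ∀ y z : E, ⟪u₂ y, u₂ z⟫ = ⟪(y : H), (z : H)⟫ := by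
    intro y z
    have := u₃.inner_map_map y z
    simpa [hu₃def, Submodule.coe_inner] using this
  set U : H →L[ℂ] H := u₂ ∘L (E.orthogonalProjectionOnto) with hUdef
  have hUS : ∀ x : H, U (S x) = T x := by
    intro x
    have hmem : S x ∈ E := R.le_topologicalClosure ⟨x, rfl⟩
    have h1 : E.orthogonalProjectionOnto (S x) = ⟨S x, hmem⟩ :=
      Submodule.orthogonalProjectionOnto_mem_subspace_eq_self (⟨S x, hmem⟩ : E)
    have h2 : (⟨S x, hmem⟩ : E) = e ⟨S x, ⟨x, rfl⟩⟩ := by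
      apply Subtype.ext
      rfl
    rw [hUdef, comp_apply, h1, h2, hu₂e]
    exact hu₀ x _
  have hUSc : U ∘L S = T := by ext x; exact hUS x
  have hadjU : adjoint U ∘L T = S := by
    ext x
    refine ext_inner_right ℂ fun v => ?_
    rw [comp_apply, adjoint_inner_left, ← hUS x]
    rw [hUdef, comp_apply, comp_apply]
    have h1 : E.orthogonalProjectionOnto (S x) =
        ⟨S x, R.le_topologicalClosure ⟨x, rfl⟩⟩ :=
      Submodule.orthogonalProjectionOnto_mem_subspace_eq_self
        (⟨S x, R.le_topologicalClosure ⟨x, rfl⟩⟩ : E)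
    rw [h1, hinner₂]
    have h2 : ⟪S x, (E.orthogonalProjectionOnto v : H)⟫ = ⟪(E.orthogonalProjectionOnto (S x) : H), v⟫ :=
      (Submodule.inner_starProjection_left_eq_right E (S x) v).symm
    rw [h2, h1]
  have hS_mem : S ∈ J := by
    have := hJ.mul_left (adjoint U) hT
    rwa [hadjU] at this
  have hTadj : adjoint T = S ∘L adjoint U := by
    rw [← hUSc, adjoint_comp, hSadj]
  rw [hTadj]
  exact hJ.mul_right (adjoint U) hS_mem

lemma IsTwoSidedIdeal.sub_mem {J : Set (H →L[ℂ] H)} (hJ : IsTwoSidedIdeal J)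
    {A B : H →L[ℂ] H} (hA : A ∈ J) (hB : B ∈ J) : A - B ∈ J := by
  rw [sub_eq_add_neg]; exact hJ.add_mem hA (hJ.neg_mem hB)

lemma IsTwoSidedIdeal.mul_left' {J : Set (H →L[ℂ] H)} (hJ : IsTwoSidedIdeal J)
    (B : H →L[ℂ] H) {A : H →L[ℂ] H} (hA : A ∈ J) : B * A ∈ J := hJ.mul_left B hA

lemma IsTwoSidedIdeal.mul_right' {J : Set (H →L[ℂ] H)} (hJ : IsTwoSidedIdeal J)
    (B : H →L[ℂ] H) {A : H →L[ℂ] H} (hA : A ∈ J) : A * B ∈ J := hJ.mul_right B hA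

/-- Let `J` be a proper two-sided ideal and `A` a closed range
operator. If `GA = V` for some partial isometry `V` and invertible `G` with
`G − I ∈ J`, then `AA* − P_{R(A)} ∈ J`. -/
theorem stmt_13 (J : Set (H →L[ℂ] H)) (hJ : IsProperIdeal J)
    (A V PRA : H →L[ℂ] H)
    (hAcl : IsClosed (LinearMap.range (A : H →ₗ[ℂ] H) : Set H))
    (hV : IsPartialIsom V)
    (G : (H →L[ℂ] H)ˣ) (hG : (G : H →L[ℂ] H) - 1 ∈ J)
    (hGA : (G : H →L[ℂ] H) ∘L A = V)
    (hPRA : IsOrthoProjOnto PRA (LinearMap.range (A : H →ₗ[ℂ] H))) :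
    A ∘L adjoint A - PRA ∈ J := by
  obtain ⟨hTSI, -, -⟩ := hJ
  obtain ⟨⟨hPP, hPsa⟩, hPrange⟩ := hPRA
  set g : H →L[ℂ] H := (G : H →L[ℂ] H) with hgdef
  set gi : H →L[ℂ] H := ((G⁻¹ : (H →L[ℂ] H)ˣ) : H →L[ℂ] H) with hgidef
  have hgig : gi * g = 1 := by rw [hgidef, hgdef]; exact G.inv_mul
  have hggi : g * gi = 1 := by rw [hgidef, hgdef]; exact G.mul_inv
  set P : H →L[ℂ] H := PRA with hPdef
  set Q : H →L[ℂ] H := V * star V with hQdef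
  have hgA : g * A = V := hGA
  have hA : A = gi * V := by rw [← hgA, ← mul_assoc, hgig, one_mul]
  -- partial isometry facts
  have hQV : Q * V = V := by
    rw [hQdef, mul_assoc]
    calc V * (star V * V) = V ∘L (adjoint V ∘L V) := by
          rw [star_eq_adjoint]; rfl
      _ = V := hV
  -- P fixes range A
  have hPA : P * A = A := by
    ext x
    have hmem : A x ∈ LinearMap.range (P : H →ₗ[ℂ] H) := by rw [hPrange]; exact ⟨x, rfl⟩
    obtain ⟨w, hw⟩ := hmem
    show P (A x) = A x
    rw [← hw]
    calc P (P w) = (P ∘L P) w := rfl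
      _ = P w := by rw [hPP]
  have hstarA_P : star A * (1 - P) = 0 := by
    have h0 : (1 - P) * A = 0 := by rw [sub_mul, one_mul, hPA, sub_self]
    have h1 : star ((1 - P) * A) = 0 := by rw [h0, star_zero]
    rwa [star_mul, star_sub, star_one, hPsa] at h1
  -- Claim 1 : Q * star gi * (1 - P) = 0
  have hc1 : Q * star gi * (1 - P) = 0 := by
    have h1 : Q * star gi = V * star A := by
      rw [hQdef, hA, star_mul, mul_assoc]
    rw [h1, mul_assoc, hstarA_P, mul_zero]
  -- Claim 2 : Q * (g * P) = g * P
  have hc2 : Q * (g * P) = g * P := by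
    ext x
    have hmem : P x ∈ LinearMap.range (A : H →ₗ[ℂ] H) := by rw [← hPrange]; exact ⟨x, rfl⟩
    obtain ⟨y, hy⟩ := hmem
    show Q (g (P x)) = g (P x)
    rw [← hy]
    have : g ((A : H →ₗ[ℂ] H) y) = V y := by rw [← hgA]; rfl
    rw [this]
    calc Q (V y) = (Q * V) y := rfl
      _ = V y := by rw [hQV]
  -- ideal memberships
  have hK : g - 1 ∈ J := hG
  have hK' : gi - 1 ∈ J := by
    have h1 : gi * -(g - 1) ∈ J := hTSI.mul_left' gi (hTSI.neg_mem hK)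
    have h2 : gi * -(g - 1) = gi - 1 := by
      rw [mul_neg, mul_sub, hgig, mul_one, neg_sub]
    rwa [h2] at h1
  have hK'' : star gi - 1 ∈ J := by
    have h1 := hTSI.star_mem hK'
    rwa [← star_eq_adjoint, star_sub, star_one] at h1
  -- three pieces
  have hJ1 : A * star A - Q ∈ J := by
    have heq : A * star A - Q = (gi - 1) * (Q * star gi) + Q * (star gi - 1) := by
      rw [hA, hQdef, star_mul]
      noncomm_ring
    rw [heq]
    exact hTSI.add_mem (hTSI.mul_right' _ hK') (hTSI.mul_left' _ hK'')
  have hJ2 : Q - Q * P ∈ J := by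
    have heq : Q - Q * P = -((Q * (star gi - 1)) * (1 - P)) := by
      have h : (Q * (star gi - 1)) * (1 - P) = Q * star gi * (1 - P) - (Q - Q * P) := by
        noncomm_ring
      rw [h, hc1, zero_sub, neg_neg]
    rw [heq]
    exact hTSI.neg_mem (hTSI.mul_right' _ (hTSI.mul_left' _ hK''))
  have hJ3 : P - Q * P ∈ J := by
    have heq : P - Q * P = -(((1 - Q) * (g - 1)) * P) := by
      have h : ((1 - Q) * (g - 1)) * P = (g * P - Q * (g * P)) - (P - Q * P) := by
        noncomm_ring
      rw [h, hc2, sub_self, zero_sub, neg_neg]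
    rw [heq]
    exact hTSI.neg_mem (hTSI.mul_right' _ (hTSI.mul_left' _ hK))
  have hfinal : A ∘L adjoint A - PRA = (A * star A - Q) + ((Q - Q * P) - (P - Q * P)) := by
    rw [← star_eq_adjoint]
    show A * star A - P = _
    abel
  rw [hfinal]
  exact hTSI.add_mem hJ1 (hTSI.sub_mem hJ2 hJ3)

end
end

section
/- Let A be a closed range operator with polar decomposition A = V_A|A|, and let B be a closed range operator with N(A) = N(B), A − B compact, such that AB*|_{R(A)} = I_{R(A)} and BA*|_{R(B)} = I_{R(B)}. Then for every symmetric norming function Φ, ‖A − (A*)^†‖_Φ ≤ ‖A − B‖_Φ. -/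
open ContinuousLinearMap
open scoped ENNReal

noncomputable section

variable {H : Type*} [NormedAddCommGroup H] [InnerProductSpace ℂ H] [CompleteSpace H]

/-! ### Auxiliary lemmas -/

/-- Uniqueness of the Moore–Penrose inverse. -/
lemma mp_unique {M X Y : H →L[ℂ] H} (hX : IsMoorePenrose M X) (hY : IsMoorePenrose M Y) :
    X = Y := by
  obtain ⟨hX1, hX2, hX3, hX4⟩ := hX
  obtain ⟨hY1, hY2, hY3, hY4⟩ := hY
  replace hX1 : M * (X * M) = M := hX1
  replace hX2 : X * (M * X) = X := hX2
  replace hY1 : M * (Y * M) = M := hY1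
  replace hY2 : Y * (M * Y) = Y := hY2
  have sX3 : star (M * X) = M * X := hX3.star_eq
  have sX4 : star (X * M) = X * M := hX4.star_eq
  have sY3 : star (M * Y) = M * Y := hY3.star_eq
  have sY4 : star (Y * M) = Y * M := hY4.star_eq
  have hMX : M * X = M * Y := by
    calc M * X = star (M * X) := sX3.symm
      _ = star X * star M := star_mul _ _
      _ = star X * star (M * (Y * M)) := by rw [hY1]
      _ = star X * (star (Y * M) * star M) := by rw [star_mul]
      _ = star X * ((star M * star Y) * star M) := by rw [star_mul]
      _ = (star X * star M) * (star Y * star M) := by simp only [mul_assoc]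
      _ = star (M * X) * star (M * Y) := by rw [star_mul, star_mul]
      _ = (M * X) * (M * Y) := by rw [sX3, sY3]
      _ = M * Y := by
          have h : (M * X) * (M * Y) = (M * (X * M)) * Y := by simp only [mul_assoc]
          rw [h, hX1]
  have hXM : X * M = Y * M := by
    calc X * M = star (X * M) := sX4.symm
      _ = star M * star X := star_mul _ _
      _ = star (M * (Y * M)) * star X := by rw [hY1]
      _ = (star (Y * M) * star M) * star X := by rw [star_mul]
      _ = ((star M * star Y) * star M) * star X := by rw [star_mul]
      _ = (star M * star Y) * (star M * star X) := by simp only [mul_assoc]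
      _ = star (Y * M) * star (X * M) := by rw [star_mul, star_mul]
      _ = (Y * M) * (X * M) := by rw [sY4, sX4]
      _ = Y * M := by
          have h : (Y * M) * (X * M) = Y * (M * (X * M)) := by simp only [mul_assoc]
          rw [h, hX1]
  calc X = X * (M * X) := hX2.symm
    _ = X * (M * Y) := by rw [hMX]
    _ = (X * M) * Y := (mul_assoc _ _ _).symm
    _ = (Y * M) * Y := by rw [hXM]
    _ = Y * (M * Y) := mul_assoc _ _ _
    _ = Y := hY2

/-- Monotonicity of a symmetric norming function in a single coordinate. -/
lemma snf_step (Φ : (ℕ →₀ ℝ) → ℝ) (hΦ : IsSymmNormingFun Φ) (x : ℕ →₀ ℝ) (i : ℕ)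
    (hx : x i = 0) {a b : ℝ} (ha : 0 ≤ a) (hab : a ≤ b) :
    Φ (x + Finsupp.single i a) ≤ Φ (x + Finsupp.single i b) := by
  rcases eq_or_lt_of_le (ha.trans hab) with hb | hb
  · obtain rfl : b = 0 := hb.symm
    obtain rfl : a = 0 := le_antisymm hab ha
    exact le_refl _
  · set s : ℝ := (b + a) / (2 * b) with hs_def
    set t : ℝ := (b - a) / (2 * b) with ht_def
    have hbne : (2 : ℝ) * b ≠ 0 := by positivity
    have hs : 0 ≤ s := div_nonneg (by linarith) (by linarith)
    have ht : 0 ≤ t := div_nonneg (by linarith) (by linarith)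
    have hst : s + t = 1 := by
      rw [hs_def, ht_def, ← add_div, div_eq_one_iff_eq hbne]
      ring
    have key : x + Finsupp.single i a
        = s • (x + Finsupp.single i b) + t • (x + Finsupp.single i (-b)) := by
      ext j
      simp only [Finsupp.add_apply, Finsupp.smul_apply, Finsupp.single_apply, smul_eq_mul]
      rcases eq_or_ne i j with rfl | hij
      · simp only [if_pos rfl, hx, zero_add, ↓reduceIte]
        rw [hs_def, ht_def]
        field_simp
        ring
      · simp only [if_neg hij, add_zero]
        linear_combination (-(x j)) * hst
    have habs : Φ (x + Finsupp.single i (-b)) = Φ (x + Finsupp.single i b) := by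
      rw [← hΦ.abs_invariant (x + Finsupp.single i (-b)),
        ← hΦ.abs_invariant (x + Finsupp.single i b)]
      congr 1
      ext j
      simp only [Finsupp.mapRange_apply, Finsupp.add_apply, Finsupp.single_apply]
      rcases eq_or_ne i j with rfl | hij
      · simp [hx, abs_neg]
      · simp [if_neg hij]
    have h1 := hΦ.triangle (s • (x + Finsupp.single i b)) (t • (x + Finsupp.single i (-b)))
    rw [hΦ.homog, hΦ.homog, abs_of_nonneg hs, abs_of_nonneg ht, habs] at h1
    rw [key]
    refine h1.trans (le_of_eq ?_)
    rw [← add_mul, hst, one_mul]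

/-- Monotonicity of a symmetric norming function on nonnegative sequences. -/
lemma snf_sum (Φ : (ℕ →₀ ℝ) → ℝ) (hΦ : IsSymmNormingFun Φ) (a b : ℕ → ℝ)
    (ha : ∀ i, 0 ≤ a i) (hab : ∀ i, a i ≤ b i) (k : ℕ) :
    Φ (∑ i ∈ Finset.range k, Finsupp.single i (a i))
      ≤ Φ (∑ i ∈ Finset.range k, Finsupp.single i (b i)) := by
  set v : ℕ → (ℕ →₀ ℝ) :=
    fun j => ∑ i ∈ Finset.range k, Finsupp.single i (if i < j then b i else a i) with hv
  have step : ∀ j, Φ (v j) ≤ Φ (v (j + 1)) := by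
    intro j
    by_cases hjk : j < k
    · have hxj : (∑ i ∈ (Finset.range k).erase j,
          Finsupp.single i (if i < j then b i else a i)) j = 0 := by
        rw [Finsupp.finset_sum_apply]
        refine Finset.sum_eq_zero fun i hi => ?_
        have hij : i ≠ j := (Finset.mem_erase.mp hi).1
        simp [Finsupp.single_apply, hij]
      have e1 : v j = (∑ i ∈ (Finset.range k).erase j,
          Finsupp.single i (if i < j then b i else a i)) + Finsupp.single j (a j) := by
        show (∑ i ∈ Finset.range k, Finsupp.single i (if i < j then b i else a i)) = _
        rw [← Finset.sum_erase_add _ _ (Finset.mem_range.mpr hjk)]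
        simp [lt_irrefl]
      have e2 : v (j + 1) = (∑ i ∈ (Finset.range k).erase j,
          Finsupp.single i (if i < j then b i else a i)) + Finsupp.single j (b j) := by
        show (∑ i ∈ Finset.range k, Finsupp.single i (if i < j + 1 then b i else a i)) = _
        rw [← Finset.sum_erase_add _ _ (Finset.mem_range.mpr hjk)]
        congr 1
        · refine Finset.sum_congr rfl fun i hi => ?_
          have hij : i ≠ j := (Finset.mem_erase.mp hi).1
          congr 1
          by_cases h : i < j
          · simp [h, Nat.lt_succ_of_lt h]
          · have h' : ¬ i < j + 1 := fun hc => h (lt_of_le_of_ne (Nat.lt_succ_iff.mp hc) hij)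
            simp [h, h']
        · simp [Nat.lt_succ_self]
      rw [e1, e2]
      exact snf_step Φ hΦ _ j hxj (ha j) (hab j)
    · have hvv : v (j + 1) = v j := by
        refine Finset.sum_congr rfl fun i hi => ?_
        have hik : i < k := Finset.mem_range.mp hi
        have h1 : i < j := lt_of_lt_of_le hik (le_of_not_gt hjk)
        simp [h1, Nat.lt_succ_of_lt h1]
      rw [hvv]
  have mono : ∀ j, Φ (v 0) ≤ Φ (v j) := by
    intro j
    induction j with
    | zero => exact le_refl _
    | succ n ih => exact ih.trans (step n)
  have h0 : v 0 = ∑ i ∈ Finset.range k, Finsupp.single i (a i) :=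
    Finset.sum_congr rfl fun i _ => by simp
  have hk : v k = ∑ i ∈ Finset.range k, Finsupp.single i (b i) :=
    Finset.sum_congr rfl fun i hi => by simp [Finset.mem_range.mp hi]
  calc Φ (∑ i ∈ Finset.range k, Finsupp.single i (a i)) = Φ (v 0) := by rw [h0]
    _ ≤ Φ (v k) := mono k
    _ = Φ (∑ i ∈ Finset.range k, Finsupp.single i (b i)) := by rw [hk]

lemma approxNum_nonneg (A : H →L[ℂ] H) (n : ℕ) : 0 ≤ approxNum A n := by
  unfold approxNum; exact Real.sInf_nonneg (by rintro c ⟨F, -, -, rfl⟩; exact norm_nonneg _)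

/-- Approximation numbers shrink when sandwiching by contractions. -/
lemma approxNum_sandwich (P Q C : H →L[ℂ] H) (hP : ∀ x, ‖P x‖ ≤ ‖x‖)
    (hQ : ∀ x, ‖Q x‖ ≤ ‖x‖) (n : ℕ) :
    approxNum (P ∘L C ∘L Q) n ≤ approxNum C n := by
  unfold approxNum
  have h0 : LinearMap.range ((0 : H →L[ℂ] H) : H →ₗ[ℂ] H) = (⊥ : Submodule ℂ H) :=
    LinearMap.range_zero
  have hne : {c : ℝ | ∃ F : H →L[ℂ] H, FiniteDimensional ℂ ↥(LinearMap.range (F : H →ₗ[ℂ] H)) ∧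
      Module.finrank ℂ ↥(LinearMap.range (F : H →ₗ[ℂ] H)) ≤ n ∧ c = ‖C - F‖}.Nonempty := by
    refine ⟨‖C - 0‖, 0, ?_, ?_, rfl⟩
    · rw [h0]; infer_instance
    · rw [h0]; simp
  refine le_csInf hne ?_
  rintro c ⟨F, hFfd, hFrk, rfl⟩
  have hle : LinearMap.range ((P ∘L F ∘L Q : H →L[ℂ] H) : H →ₗ[ℂ] H) ≤ (LinearMap.range (F : H →ₗ[ℂ] H)).map (P : H →ₗ[ℂ] H) := by
    rintro y ⟨x, rfl⟩
    exact ⟨F (Q x), LinearMap.mem_range_self _ _, rfl⟩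
  haveI hfd1 : FiniteDimensional ℂ ↥((LinearMap.range (F : H →ₗ[ℂ] H)).map (P : H →ₗ[ℂ] H)) :=
    Module.Finite.map _ _
  haveI hfd2 : FiniteDimensional ℂ ↥(LinearMap.range ((P ∘L F ∘L Q : H →L[ℂ] H) : H →ₗ[ℂ] H)) :=
    Submodule.finiteDimensional_of_le hle
  have hrk : Module.finrank ℂ ↥(LinearMap.range ((P ∘L F ∘L Q : H →L[ℂ] H) : H →ₗ[ℂ] H)) ≤ n :=
    le_trans (le_trans (Submodule.finrank_mono hle) (Submodule.finrank_map_le _ _)) hFrk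
  have hbdd : BddBelow {c : ℝ | ∃ F' : H →L[ℂ] H,
      FiniteDimensional ℂ ↥(LinearMap.range (F' : H →ₗ[ℂ] H)) ∧
      Module.finrank ℂ ↥(LinearMap.range (F' : H →ₗ[ℂ] H)) ≤ n ∧ c = ‖P ∘L C ∘L Q - F'‖} := by
    refine ⟨0, ?_⟩
    rintro c ⟨F', -, -, rfl⟩
    exact norm_nonneg _
  have hmem : ‖P ∘L C ∘L Q - P ∘L F ∘L Q‖ ∈ {c : ℝ | ∃ F' : H →L[ℂ] H,
      FiniteDimensional ℂ ↥(LinearMap.range (F' : H →ₗ[ℂ] H)) ∧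
      Module.finrank ℂ ↥(LinearMap.range (F' : H →ₗ[ℂ] H)) ≤ n ∧ c = ‖P ∘L C ∘L Q - F'‖} :=
    ⟨P ∘L F ∘L Q, hfd2, hrk, rfl⟩
  refine (csInf_le hbdd hmem).trans ?_
  have hfac : P ∘L C ∘L Q - P ∘L F ∘L Q = P ∘L (C - F) ∘L Q := by
    ext x
    simp
  rw [hfac]
  refine ContinuousLinearMap.opNorm_le_bound _ (norm_nonneg _) fun x => ?_
  calc ‖(P ∘L (C - F) ∘L Q) x‖ = ‖P ((C - F) (Q x))‖ := rfl
    _ ≤ ‖(C - F) (Q x)‖ := hP _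
    _ ≤ ‖C - F‖ * ‖Q x‖ := (C - F).le_opNorm _
    _ ≤ ‖C - F‖ * ‖x‖ := mul_le_mul_of_nonneg_left (hQ x) (norm_nonneg _)

lemma phiNorm_mono (Φ : (ℕ →₀ ℝ) → ℝ) (hΦ : IsSymmNormingFun Φ) (X Y : H →L[ℂ] H)
    (h : ∀ i, approxNum X i ≤ approxNum Y i) : phiNorm Φ X ≤ phiNorm Φ Y :=
  iSup_mono fun k => ENNReal.ofReal_le_ofReal
    (snf_sum Φ hΦ _ _ (fun i => approxNum_nonneg X i) h k)

lemma proj_norm_le (K : Submodule ℂ H) [CompleteSpace K] (x : H) :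
    ‖(K.subtypeL ∘L K.orthogonalProjectionOnto) x‖ ≤ ‖x‖ := by
  have h1 : ‖(K.subtypeL ∘L K.orthogonalProjectionOnto) x‖ = ‖K.orthogonalProjectionOnto x‖ := rfl
  rw [h1]
  calc ‖K.orthogonalProjectionOnto x‖ ≤ ‖K.orthogonalProjectionOnto‖ * ‖x‖ :=
        (K.orthogonalProjectionOnto).le_opNorm x
    _ ≤ 1 * ‖x‖ := mul_le_mul_of_nonneg_right (Submodule.orthogonalProjectionOnto_norm_le K) (norm_nonneg x)
    _ = ‖x‖ := one_mul _

/-- Let `A` be a closed range operator and `B` a closed range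
operator with `N(A) = N(B)`, `A − B` compact, `AB*|_{R(A)} = I_{R(A)}` and
`BA*|_{R(B)} = I_{R(B)}`. Then for every symmetric norming function `Φ`,
`‖A − (A*)†‖_Φ ≤ ‖A − B‖_Φ`. -/
theorem stmt_14 (A B Asd : H →L[ℂ] H)
    (hAcl : IsClosed (LinearMap.range (A : H →ₗ[ℂ] H) : Set H))
    (hBcl : IsClosed (LinearMap.range (B : H →ₗ[ℂ] H) : Set H))
    (hker : LinearMap.ker (A : H →ₗ[ℂ] H) = LinearMap.ker (B : H →ₗ[ℂ] H))
    (hcpt : IsCompactOperator (⇑(A - B)))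
    (hAB : ∀ x ∈ LinearMap.range (A : H →ₗ[ℂ] H), (A ∘L adjoint B) x = x)
    (hBA : ∀ x ∈ LinearMap.range (B : H →ₗ[ℂ] H), (B ∘L adjoint A) x = x)
    (hAsd : IsMoorePenrose (adjoint A) Asd) :
    ∀ Φ : (ℕ →₀ ℝ) → ℝ, IsSymmNormingFun Φ →
      phiNorm Φ (A - Asd) ≤ phiNorm Φ (A - B) := by
  intro Φ hΦ
  haveI hKc : CompleteSpace (LinearMap.range (A : H →ₗ[ℂ] H)) := hAcl.completeSpace_coe
  haveI hNc : CompleteSpace (LinearMap.ker (A : H →ₗ[ℂ] H)) := (isClosed_ker A).completeSpace_coe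
  set K : Submodule ℂ H := LinearMap.range (A : H →ₗ[ℂ] H) with hK
  set N : Submodule ℂ H := LinearMap.ker (A : H →ₗ[ℂ] H) with hN
  set P : H →L[ℂ] H := K.subtypeL ∘L K.orthogonalProjectionOnto with hPdef
  set Q : H →L[ℂ] H := Nᗮ.subtypeL ∘L Nᗮ.orthogonalProjectionOnto with hQdef
  have hPsa : IsSelfAdjoint P := isSelfAdjoint_starProjection K
  have hQsa : IsSelfAdjoint Q := isSelfAdjoint_starProjection Nᗮ
  have hPmem : ∀ x, P x ∈ K := fun x => (K.orthogonalProjectionOnto x).2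
  have hQmem : ∀ x, Q x ∈ Nᗮ := fun x => (Nᗮ.orthogonalProjectionOnto x).2
  have hPfix : ∀ x ∈ K, P x = x := fun x hx => Submodule.starProjection_eq_self_iff.mpr hx
  have hQfix : ∀ x ∈ Nᗮ, Q x = x := fun x hx => Submodule.starProjection_eq_self_iff.mpr hx
  have f1 : P * A = A := by
    ext x
    exact hPfix (A x) ⟨x, rfl⟩
  have f2 : A * Q = A := by
    ext x
    have hmem : x - Q x ∈ N := by
      have h := Submodule.sub_starProjection_mem_orthogonal (K := Nᗮ) x
      rwa [Submodule.orthogonal_orthogonal] at h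
    have h0 : A (x - Q x) = 0 := hmem
    rw [map_sub] at h0
    show A (Q x) = A x
    have := sub_eq_zero.mp h0
    exact this.symm
  have f3 : adjoint A * P = adjoint A := by
    rw [← ContinuousLinearMap.star_eq_adjoint, ← hPsa.star_eq, ← star_mul, f1]
  have f4 : Q * adjoint A = adjoint A := by
    rw [← ContinuousLinearMap.star_eq_adjoint, ← hQsa.star_eq, ← star_mul, f2]
  have f5 : A * (star B * P) = P := by
    ext x
    exact hAB (P x) (hPmem x)
  have f6 : P * (B * adjoint A) = P := by
    have h := congrArg star f5
    rw [star_mul, star_mul, star_star, hPsa.star_eq, mul_assoc,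
      ContinuousLinearMap.star_eq_adjoint] at h
    exact h
  have e1 : adjoint A * (B * adjoint A) = adjoint A := by
    calc adjoint A * (B * adjoint A) = (adjoint A * P) * (B * adjoint A) := by rw [f3]
      _ = adjoint A * (P * (B * adjoint A)) := by rw [mul_assoc]
      _ = adjoint A * P := by rw [f6]
      _ = adjoint A := f3
  have f7 : adjoint A * (B * Q) = Q := by
    ext x
    show adjoint A (B (Q x)) = Q x
    have hQx : Q x ∈ Nᗮ := hQmem x
    have horth : (LinearMap.range ((adjoint A : H →L[ℂ] H) : H →ₗ[ℂ] H))ᗮ ≤ N := by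
      intro y hy
      have h0 : (inner ℂ (adjoint A (A y)) y : ℂ) = 0 :=
        (Submodule.mem_orthogonal _ _).mp hy _ (LinearMap.mem_range_self _ (A y))
      rw [ContinuousLinearMap.adjoint_inner_left] at h0
      have hAy : A y = 0 := inner_self_eq_zero.mp h0
      exact LinearMap.mem_ker.mpr hAy
    have hsub : (Nᗮ : Set H) ⊆
        closure ((LinearMap.range ((adjoint A : H →L[ℂ] H) : H →ₗ[ℂ] H) : Submodule ℂ H) : Set H) := by
      have h2 : Nᗮ ≤ ((LinearMap.range ((adjoint A : H →L[ℂ] H) : H →ₗ[ℂ] H))ᗮ)ᗮ :=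
        Submodule.orthogonal_le horth
      rw [Submodule.orthogonal_orthogonal_eq_closure] at h2
      intro y hy
      have h3 := h2 hy
      rwa [← Submodule.topologicalClosure_coe]
    have hclosed : IsClosed {y : H | adjoint A (B y) = y} :=
      isClosed_eq ((adjoint A).continuous.comp B.continuous) continuous_id
    have hrange : ((LinearMap.range ((adjoint A : H →L[ℂ] H) : H →ₗ[ℂ] H) : Submodule ℂ H) : Set H) ⊆
        {y : H | adjoint A (B y) = y} := by
      rintro _ ⟨y, rfl⟩
      exact DFunLike.congr_fun e1 y
    exact closure_minimal hrange hclosed (hsub hQx)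
  have hPP : P * P = P := by
    ext x
    exact hPfix (P x) (hPmem x)
  have hQQ : Q * Q = Q := by
    ext x
    exact hQfix (Q x) (hQmem x)
  have hMX : adjoint A * (P * (B * Q)) = Q := by
    calc adjoint A * (P * (B * Q)) = (adjoint A * P) * (B * Q) := (mul_assoc _ _ _).symm
      _ = adjoint A * (B * Q) := by rw [f3]
      _ = Q := f7
  have hXM : (P * (B * Q)) * adjoint A = P := by
    calc (P * (B * Q)) * adjoint A = P * (B * (Q * adjoint A)) := by simp only [mul_assoc]
      _ = P * (B * adjoint A) := by rw [f4]
      _ = P := f6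
  have hXmp : IsMoorePenrose (adjoint A) (P ∘L B ∘L Q) := by
    refine ⟨?_, ?_, ?_, ?_⟩
    · simp only [← ContinuousLinearMap.mul_def]
      rw [hXM]
      exact f3
    · simp only [← ContinuousLinearMap.mul_def]
      rw [hMX]
      calc (P * (B * Q)) * Q = P * (B * (Q * Q)) := by simp only [mul_assoc]
        _ = P * (B * Q) := by rw [hQQ]
    · simp only [← ContinuousLinearMap.mul_def]
      rw [hMX]
      exact hQsa
    · simp only [← ContinuousLinearMap.mul_def]
      rw [hXM]
      exact hPsa
  have hAsdEq0 : Asd = P ∘L B ∘L Q := mp_unique hAsd hXmp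
  have hAsdEq : Asd = P * (B * Q) := by
    rw [hAsdEq0, ContinuousLinearMap.mul_def, ContinuousLinearMap.mul_def]
  have hdiff : A - Asd = P * ((A - B) * Q) := by
    rw [hAsdEq]
    calc A - P * (B * Q) = P * (A * Q) - P * (B * Q) := by rw [f2, f1]
      _ = P * ((A - B) * Q) := by rw [sub_mul, mul_sub]
  have hPn : ∀ x, ‖P x‖ ≤ ‖x‖ := proj_norm_le K
  have hQn : ∀ x, ‖Q x‖ ≤ ‖x‖ := proj_norm_le Nᗮ
  have happ : ∀ i, approxNum (A - Asd) i ≤ approxNum (A - B) i := by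
    intro i
    have h := approxNum_sandwich P Q (A - B) hPn hQn i
    have hdiff' : P ∘L (A - B) ∘L Q = A - Asd := by
      rw [hdiff, ContinuousLinearMap.mul_def, ContinuousLinearMap.mul_def]
    rwa [hdiff'] at h
  exact phiNorm_mono Φ hΦ _ _ happ


end
end
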